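/- For every integer k ≥ 1 and 0 < t < 1/k², the Gegenbauer polynomial C_k^{3/2} satisfies C_k^{3/2}(1) - B(k) t ≤ C_k^{3/2}(1-t) ≤ C_k^{3/2}(1) - B(k) t + K₀ t², where B(k) = k(k+1)(k+2)(k+3)/8 and K₀ is some finite positive constant (which may depend on k). -/

import Mathlib

/-- The Gegenbauer polynomial `C_n^{3/2}`, via its recurrence, as a function on `ℝ`. -/
noncomputable def gegenbauerC : ℕ → ℝ → ℝ
  | 0 => fun _ => 1
  | 1 => fun x => 3*x
  | (n+2) => fun x =>
      ((2*(n:ℝ)+5) * x * gegenbauerC (n+1) x - ((n:ℝ)+3) * gegenbauerC n x) / ((n:ℝ)+2)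

noncomputable def gc (k j : ℕ) : ℝ :=
  if j ≤ k then (Nat.factorial (k+j+2) : ℝ) /
    (2^(j+1) * Nat.factorial j * Nat.factorial (j+1) * Nat.factorial (k-j)) else 0

lemma gc_eq {k j : ℕ} (h : j ≤ k) : gc k j = (Nat.factorial (k+j+2) : ℝ) /
    (2^(j+1) * Nat.factorial j * Nat.factorial (j+1) * Nat.factorial (k-j)) := if_pos h

lemma gc_zero {k j : ℕ} (h : k < j) : gc k j = 0 := if_neg (by omega)

lemma fact_succ_cast (m : ℕ) : ((Nat.factorial (m+1) : ℝ)) = ((m:ℝ)+1) * Nat.factorial m := by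
  push_cast [Nat.factorial_succ]; ring

lemma fact_cast_pos (m : ℕ) : (0:ℝ) < (Nat.factorial m : ℝ) := by
  exact_mod_cast Nat.factorial_pos m

lemma gc_rec (n j : ℕ) :
    ((n:ℝ)+2) * gc (n+2) j =
      (2*(n:ℝ)+5) * gc (n+1) j + (2*(n:ℝ)+5) * (if j = 0 then (0:ℝ) else gc (n+1) (j-1))
        - ((n:ℝ)+3) * gc n j := by
  rcases Nat.eq_zero_or_pos j with rfl | hj
  · -- j = 0
    simp only [gc, Nat.zero_le, if_true, if_pos rfl, Nat.sub_zero]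
    simp only [fact_succ_cast]
    have h0 := (fact_cast_pos n).ne'
    norm_num [Nat.factorial]
    field_simp
    ring
  · obtain ⟨i, rfl⟩ : ∃ i, j = i + 1 := ⟨j-1, by omega⟩
    simp only [if_neg (Nat.succ_ne_zero i), Nat.add_sub_cancel]
    rcases le_or_gt (i+1) n with hle | hgt
    · -- generic case 1 ≤ j ≤ n
      obtain ⟨m, rfl⟩ : ∃ m, n = i+1+m := ⟨n-(i+1), by omega⟩
      rw [gc_eq (show i+1 ≤ i+1+m+2 by omega), gc_eq (show i+1 ≤ i+1+m+1 by omega),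
        gc_eq (show i ≤ i+1+m+1 by omega), gc_eq (show i+1 ≤ i+1+m by omega)]
      rw [show i+1+m+2+(i+1)+2 = m+2*i+4+1+1 by omega,
        show i+1+m+1+(i+1)+2 = m+2*i+4+1 by omega,
        show i+1+m+1+i+2 = m+2*i+4 by omega,
        show i+1+m+(i+1)+2 = m+2*i+4 by omega,
        show i+1+m+2-(i+1) = m+1+1 by omega,
        show i+1+m+1-(i+1) = m+1 by omega,
        show i+1+m+1-i = m+1+1 by omega,
        show i+1+m-(i+1) = m by omega]
      simp only [fact_succ_cast]
      have h1 := (fact_cast_pos m).ne'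
      have h2 := (fact_cast_pos i).ne'
      have h3 := (fact_cast_pos (m+2*i+4)).ne'
      field_simp
      push_cast
      ring
    · rcases (by omega : i+1 = n+1 ∨ i+1 = n+2 ∨ n+2 < i+1) with h | h | h
      · -- j = n+1
        obtain rfl : i = n := by omega
        clear hgt hj
        rw [gc_eq (show i+1 ≤ i+2 by omega), gc_eq (le_refl (i+1)),
          gc_eq (show i ≤ i+1 by omega), gc_zero (show i < i+1 by omega)]
        rw [show i+2+(i+1)+2 = 2*i+3+1+1 by omega,
          show i+1+(i+1)+2 = 2*i+3+1 by omega,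
          show i+1+i+2 = 2*i+3 by omega,
          show i+2-(i+1) = 1 by omega, show i+1-(i+1) = 0 by omega,
          show i+1-i = 1 by omega]
        simp only [fact_succ_cast]
        have h2 := (fact_cast_pos i).ne'
        have h3 := (fact_cast_pos (2*i+3)).ne'
        norm_num [Nat.factorial]
        field_simp
        ring
      · -- j = n+2
        obtain rfl : i = n+1 := by omega
        rw [gc_eq (le_refl (n+2)), gc_zero (show n+1 < n+2 by omega),
          gc_eq (le_refl (n+1)), gc_zero (show n < n+2 by omega)]
        rw [show n+2+(n+2)+2 = 2*n+4+1+1 by omega,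
          show n+1+(n+1)+2 = 2*n+4 by omega,
          show n+2-(n+2) = 0 by omega, show n+1-(n+1) = 0 by omega]
        simp only [fact_succ_cast]
        have h2 := (fact_cast_pos n).ne'
        have h3 := (fact_cast_pos (2*n+4)).ne'
        norm_num [Nat.factorial]
        field_simp
        ring
      · rw [gc_zero (by omega), gc_zero (by omega), gc_zero (by omega), gc_zero (by omega)]
        ring

lemma gc_expand (k : ℕ) (x : ℝ) :
    gegenbauerC k x = ∑ j ∈ Finset.range (k+1), gc k j * (x-1)^j := by
  induction k using Nat.twoStepInduction generalizing x with
  | zero => simp [gegenbauerC, gc, Nat.factorial]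
  | one =>
      rw [Finset.sum_range_succ, Finset.sum_range_succ]
      norm_num [gegenbauerC, gc, Nat.factorial]
      ring
  | more n ih0 ih1 =>
      have hn2 : ((n:ℝ)+2) ≠ 0 := by positivity
      show ((2*(n:ℝ)+5) * x * gegenbauerC (n+1) x - ((n:ℝ)+3) * gegenbauerC n x) / ((n:ℝ)+2) = _
      rw [ih0, ih1, div_eq_iff hn2]
      set y := x - 1 with hy
      have hS0 : ∑ j ∈ Finset.range (n+1), gc n j * y^j
          = ∑ j ∈ Finset.range (n+3), gc n j * y^j :=
        Finset.sum_subset (Finset.range_mono (by omega)) (fun j _ hj => by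
          rw [gc_zero (show n < j by simpa [Finset.mem_range] using hj), zero_mul])
      have hS1 : ∑ j ∈ Finset.range (n+2), gc (n+1) j * y^j
          = ∑ j ∈ Finset.range (n+3), gc (n+1) j * y^j :=
        Finset.sum_subset (Finset.range_mono (by omega)) (fun j _ hj => by
          rw [gc_zero (show n+1 < j by rw [Finset.mem_range] at hj; omega), zero_mul])
      have hshift : ∑ j ∈ Finset.range (n+3), (if j = 0 then (0:ℝ) else gc (n+1) (j-1)) * y^j
          = y * ∑ j ∈ Finset.range (n+2), gc (n+1) j * y^j := by
        rw [show n+3 = (n+2)+1 from rfl, Finset.sum_range_succ', Finset.mul_sum]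
        simp only [Nat.succ_ne_zero, if_false, Nat.add_sub_cancel, if_pos rfl, pow_zero,
          mul_one, reduceIte, add_zero]
        exact Finset.sum_congr rfl fun i _ => by ring
      have hmain : (∑ j ∈ Finset.range (n+3), gc (n+2) j * y^j) * ((n:ℝ)+2)
          = (2*(n:ℝ)+5) * (∑ j ∈ Finset.range (n+3), gc (n+1) j * y^j)
            + (2*(n:ℝ)+5) * (∑ j ∈ Finset.range (n+3),
                (if j = 0 then (0:ℝ) else gc (n+1) (j-1)) * y^j)
            - ((n:ℝ)+3) * (∑ j ∈ Finset.range (n+3), gc n j * y^j) := by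
        rw [Finset.sum_mul, Finset.mul_sum, Finset.mul_sum, Finset.mul_sum,
          ← Finset.sum_add_distrib, ← Finset.sum_sub_distrib]
        refine Finset.sum_congr rfl fun j _ => ?_
        linear_combination (gc_rec n j) * y^j
      rw [hmain, hshift, ← hS1, ← hS0]
      have hxy : x = 1 + y := by rw [hy]; ring
      rw [hxy]
      ring

lemma gc_nonneg (k j : ℕ) : 0 ≤ gc k j := by
  unfold gc
  split
  · positivity
  · exact le_refl 0

lemma gc_ratio {k j : ℕ} (h : j+1 ≤ k) :
    2*((j:ℝ)+1)*((j:ℝ)+2) * gc k (j+1) = (((k:ℝ)+(j:ℝ)+3)*((k:ℝ)-(j:ℝ))) * gc k j := by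
  obtain ⟨m, rfl⟩ : ∃ m, k = j+1+m := ⟨k-(j+1), by omega⟩
  rw [gc_eq (by omega), gc_eq (by omega)]
  rw [show j+1+m+(j+1)+2 = 2*j+m+3+1 by omega, show j+1+m+j+2 = 2*j+m+3 by omega,
    show j+1+m-(j+1) = m by omega, show j+1+m-j = m+1 by omega]
  simp only [fact_succ_cast]
  have h1 := (fact_cast_pos m).ne'
  have h2 := (fact_cast_pos j).ne'
  have h3 := (fact_cast_pos (2*j+m+3)).ne'
  push_cast
  field_simp
  ring

lemma alt_sum (b : ℕ → ℝ) (hb : ∀ i, 0 ≤ b i) (hmono : ∀ i, b (i+1) ≤ b i) (n : ℕ) :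
    ∀ s, 0 ≤ (∑ j ∈ Finset.range n, (-1:ℝ)^j * b (s+j))
      ∧ (∑ j ∈ Finset.range n, (-1:ℝ)^j * b (s+j)) ≤ b s := by
  induction n with
  | zero => intro s; simpa using hb s
  | succ n ih =>
    intro s
    have key : ∑ j ∈ Finset.range (n+1), (-1:ℝ)^j * b (s+j)
        = b s - ∑ j ∈ Finset.range n, (-1:ℝ)^j * b ((s+1)+j) := by
      rw [Finset.sum_range_succ']
      have e : ∀ j, (-1:ℝ)^(j+1) * b (s+(j+1)) = -((-1:ℝ)^j * b ((s+1)+j)) := fun j => by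
        rw [show s+(j+1) = (s+1)+j by omega]; ring
      rw [Finset.sum_congr rfl (fun j _ => e j), Finset.sum_neg_distrib]
      simp only [Nat.add_zero, pow_zero, one_mul]
      ring
    obtain ⟨h1, h2⟩ := ih (s+1)
    refine ⟨?_, ?_⟩
    · rw [key]; linarith [hmono s]
    · rw [key]; linarith [hb (s+1)]

theorem gegenbauer_taylor_bounds (k : ℕ) (hk : 1 ≤ k) :
    ∃ K₀ : ℝ, 0 < K₀ ∧ ∀ t : ℝ, 0 < t → t < 1/(k:ℝ)^2 →
      gegenbauerC k 1 - ((k:ℝ)*(k+1)*(k+2)*(k+3)/8) * t ≤ gegenbauerC k (1 - t)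
      ∧ gegenbauerC k (1 - t)
          ≤ gegenbauerC k 1 - ((k:ℝ)*(k+1)*(k+2)*(k+3)/8) * t + K₀ * t^2 := by
  have hk1 : (1:ℝ) ≤ (k:ℝ) := by exact_mod_cast hk
  have hkpos : (0:ℝ) < (k:ℝ)^2 := by positivity
  have hgc2 := gc_nonneg k 2
  refine ⟨gc k 2 + 1, by linarith, ?_⟩
  intro t ht ht2
  have htk : t * (k:ℝ)^2 ≤ 1 := by
    rw [div_eq_mul_inv, one_mul] at ht2
    calc t * (k:ℝ)^2 ≤ ((k:ℝ)^2)⁻¹ * (k:ℝ)^2 := by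
          exact mul_le_mul_of_nonneg_right ht2.le (le_of_lt hkpos)
      _ = 1 := inv_mul_cancel₀ hkpos.ne'
  -- the coefficient sequence
  set b : ℕ → ℝ := fun j => gc k j * t^j with hb_def
  have hb : ∀ i, 0 ≤ b i := fun i => mul_nonneg (gc_nonneg k i) (pow_nonneg ht.le i)
  have hkey : ∀ i, gc k (i+1) * t ≤ gc k i := by
    intro i
    rcases le_or_gt (i+1) k with h | h
    · have hr := gc_ratio h
      have hik : ((i:ℝ)+1) ≤ (k:ℝ) := by exact_mod_cast h
      have hi0 : (0:ℝ) ≤ (i:ℝ) := Nat.cast_nonneg i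
      have q1 : ((k:ℝ)+(i:ℝ)+3)*((k:ℝ)-(i:ℝ)) ≤ 4*(k:ℝ)^2 := by nlinarith
      have q0 : (0:ℝ) ≤ ((k:ℝ)+(i:ℝ)+3)*((k:ℝ)-(i:ℝ)) := by nlinarith
      have q2 : ((k:ℝ)+(i:ℝ)+3)*((k:ℝ)-(i:ℝ))*t ≤ 4 := by
        nlinarith [mul_le_mul_of_nonneg_right q1 ht.le]
      have hgi := gc_nonneg k i
      have hgi1 := gc_nonneg k (i+1)
      have q3 : 2*((i:ℝ)+1)*((i:ℝ)+2) * (gc k (i+1) * t) ≤ 4 * gc k i := by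
        have : 2*((i:ℝ)+1)*((i:ℝ)+2) * (gc k (i+1) * t)
            = (((k:ℝ)+(i:ℝ)+3)*((k:ℝ)-(i:ℝ))*t) * gc k i := by
          linear_combination t * hr
        rw [this]
        exact mul_le_mul_of_nonneg_right q2 hgi
      nlinarith [mul_nonneg (mul_nonneg hgi1 ht.le) hi0,
        mul_nonneg (mul_nonneg (mul_nonneg hgi1 ht.le) hi0) hi0]
    · rw [gc_zero h, zero_mul]
      exact gc_nonneg k i
  have hmono : ∀ i, b (i+1) ≤ b i := by
    intro i
    have : b (i+1) = (gc k (i+1) * t) * t^i := by simp [hb_def, pow_succ]; ring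
    rw [this, hb_def]
    exact mul_le_mul_of_nonneg_right (hkey i) (pow_nonneg ht.le i)
  -- expansion of gegenbauerC at 1 - t
  have hexp : gegenbauerC k (1-t) = ∑ j ∈ Finset.range (k+1), (-1:ℝ)^j * b j := by
    rw [gc_expand]
    refine Finset.sum_congr rfl fun j _ => ?_
    rw [show (1:ℝ)-t-1 = -t by ring, neg_pow]
    simp [hb_def]; ring
  obtain ⟨K, hK⟩ : ∃ K, k = K+1 := ⟨k-1, by omega⟩
  -- split off first two terms
  have hsplit : gegenbauerC k (1-t)
      = b 0 - b 1 + ∑ j ∈ Finset.range K, (-1:ℝ)^j * b (2+j) := by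
    rw [hexp, hK, show K+1+1 = (K+1)+1 from rfl, Finset.sum_range_succ',
      Finset.sum_range_succ']
    have e : ∀ j, (-1:ℝ)^(j+1+1) * b (j+1+1) = (-1:ℝ)^j * b (2+j) := fun j => by
      rw [show j+1+1 = 2+j by omega]; ring
    rw [Finset.sum_congr rfl (fun j _ => e j)]
    simp [← hK]
    ring
  obtain ⟨hR0, hR1⟩ := alt_sum b hb hmono K 2
  -- identify b 0 and b 1
  have hb0 : gegenbauerC k 1 = b 0 := by
    rw [gc_expand]
    rw [Finset.sum_eq_single 0 (fun j _ hj => by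
        rw [show (1:ℝ)-1 = 0 by ring, zero_pow hj, mul_zero])
      (fun h => absurd (Finset.mem_range.2 (by omega)) h)]
    simp [hb_def]
  have hb1 : b 1 = ((k:ℝ)*((k:ℝ)+1)*((k:ℝ)+2)*((k:ℝ)+3)/8) * t := by
    have : gc k 1 = (k:ℝ)*((k:ℝ)+1)*((k:ℝ)+2)*((k:ℝ)+3)/8 := by
      rw [hK, gc_eq (by omega), show K+1+1+2 = K+1+1+1+1 by omega,
        show K+1-1 = K by omega]
      simp only [fact_succ_cast]
      have h1 := (fact_cast_pos K).ne'
      norm_num [Nat.factorial]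
      field_simp
      ring
    simp only [hb_def, this, pow_one]
  have hb2 : b 2 ≤ (gc k 2 + 1) * t^2 := by
    have : b 2 = gc k 2 * t^2 := rfl
    nlinarith [sq_nonneg t]
  constructor
  · rw [hsplit, hb0, ← hb1]; linarith
  · rw [hsplit, hb0, ← hb1]; linarith
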